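/- Let G be a graph on n vertices with vertex connectivity at most k (1 ≤ k ≤ n−2) that maximizes the Sombor index among all such graphs, and let W be a k-vertex cut of G. Then G − W has exactly two connected components, and for each component H of G − W, the induced subgraph G[V(H) ∪ W] is a clique. -/
import Mathlib


/-- The Sombor index of a finite simple graph:
`SO(G) = Σ_{uv ∈ E(G)} √(d(u)² + d(v)²)`. -/
noncomputable def somborIndex {V : Type*} [Fintype V] (G : SimpleGraph V) : ℝ := by
  classical
  exact ∑ e ∈ G.edgeFinset,
    Sym2.lift ⟨fun u v => Real.sqrt ((G.degree u : ℝ)^2 + (G.degree v : ℝ)^2),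
      fun u v => by simp [add_comm]⟩ e

/-- The vertex connectivity of G is at most k: either G has at most k+1
vertices, or some set of at most k vertices disconnects G. -/
def vertexConnAtMost {V : Type*} [Fintype V] (G : SimpleGraph V) (k : ℕ) : Prop :=
  Fintype.card V ≤ k + 1 ∨
    ∃ S : Finset V, S.card ≤ k ∧ ¬ (G.induce ((↑S : Set V)ᶜ)).Connected

open SimpleGraph

lemma aux_degree_mono {V : Type*} [Fintype V] {G H : SimpleGraph V} (h : G ≤ H) (v : V)
    [Fintype (G.neighborSet v)] [Fintype (H.neighborSet v)] :
    G.degree v ≤ H.degree v := by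
  classical
  simp only [← card_neighborSet_eq_degree]
  exact Set.card_le_card fun x hx => h hx

/-- Adding edges strictly increases the Sombor index. -/
lemma aux_somborIndex_lt {V : Type*} [Fintype V] {G H : SimpleGraph V} (h : G < H) :
    somborIndex G < somborIndex H := by
  classical
  unfold somborIndex
  obtain ⟨x, y, hxy, hnxy⟩ : ∃ x y, H.Adj x y ∧ ¬ G.Adj x y := by
    by_contra hc
    push_neg at hc
    exact h.not_ge fun a b hab => hc a b hab
  calc (∑ e ∈ G.edgeFinset,
      Sym2.lift ⟨fun u v => Real.sqrt ((G.degree u : ℝ)^2 + (G.degree v : ℝ)^2),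
        fun u v => by simp [add_comm]⟩ e)
      ≤ ∑ e ∈ G.edgeFinset,
      Sym2.lift ⟨fun u v => Real.sqrt ((H.degree u : ℝ)^2 + (H.degree v : ℝ)^2),
        fun u v => by simp [add_comm]⟩ e := by
        refine Finset.sum_le_sum fun e he => ?_
        induction e using Sym2.inductionOn with
        | hf a b =>
          simp only [Sym2.lift_mk]
          apply Real.sqrt_le_sqrt
          gcongr <;> [skip; skip] <;> exact_mod_cast aux_degree_mono h.le _
    _ < _ := by
        refine Finset.sum_lt_sum_of_subset (edgeFinset_mono h.le)
          (i := s(x, y)) (mem_edgeFinset.mpr hxy) (by simp [hnxy]) ?_ ?_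
        · simp only [Sym2.lift_mk]
          apply Real.sqrt_pos.mpr
          apply add_pos_of_pos_of_nonneg _ (sq_nonneg _)
          have : 0 < H.degree x := by
            rw [degree_pos_iff_exists_adj]; exact ⟨y, hxy⟩
          positivity
        · intro j _ _
          induction j using Sym2.inductionOn with
          | hf a b => simp only [Sym2.lift_mk]; exact Real.sqrt_nonneg _

/-- A function constant on edges is constant on reachability classes. -/
lemma aux_reachable_const {V : Type*} {G : SimpleGraph V} {β : Type*} (f : V → β)
    (h : ∀ x y, G.Adj x y → f x = f y) {x y : V} (hr : G.Reachable x y) : f x = f y := by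
  obtain ⟨w⟩ := hr
  induction w with
  | nil => rfl
  | cons hadj _ ih => exact (h _ _ hadj).trans ih

/-- If G maximizes the Sombor index among graphs on n vertices with vertex
connectivity at most k (1 ≤ k ≤ n−2) and W is a k-vertex cut of G, then G − W
has exactly two connected components, and for every component C of G − W the
induced subgraph on V(C) ∪ W is a clique. -/
theorem structure_of_max_somborIndex {V : Type*} [Fintype V] (G : SimpleGraph V)
    (n k : ℕ) (hcard : Fintype.card V = n) (hk : 1 ≤ k) (hkn : k ≤ n - 2)
    (hconn : vertexConnAtMost G k)
    (hmax : ∀ H : SimpleGraph V, vertexConnAtMost H k → somborIndex H ≤ somborIndex G)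
    (W : Finset V) (hW : W.card = k)
    (hcut : ¬ (G.induce ((↑W : Set V)ᶜ)).Connected) :
    Nat.card (G.induce ((↑W : Set V)ᶜ)).ConnectedComponent = 2 ∧
      ∀ C : (G.induce ((↑W : Set V)ᶜ)).ConnectedComponent,
        G.IsClique ((Subtype.val '' C.supp) ∪ (↑W : Set V)) := by
  classical
  subst hcard
  set S : Set V := (↑W : Set V)ᶜ with hS
  have hn2 : k + 2 ≤ Fintype.card V := by omega
  -- S is nonempty
  have hneS : Nonempty S := by
    by_contra h
    have hempty : S = ∅ := Set.not_nonempty_iff_eq_empty.mp (fun ⟨x, hx⟩ => h ⟨⟨x, hx⟩⟩)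
    have : ∀ v : V, v ∈ W := by
      intro v
      by_contra hv
      have : v ∈ S := by simp [hS, hv]
      simp [hempty] at this
    have : (Finset.univ : Finset V) ⊆ W := fun v _ => this v
    have := Finset.card_le_card this
    simp [hW] at this
    omega
  -- two non-reachable vertices in S
  have hpre : ¬ (G.induce S).Preconnected := fun hp => hcut ((connected_iff _).mpr ⟨hp, hneS⟩)
  obtain ⟨x0, y0, hxy0⟩ : ∃ x y : S, ¬ (G.induce S).Reachable x y := by
    by_contra h; push_neg at h; exact hpre h
  have hC12 : (G.induce S).connectedComponentMk x0 ≠ (G.induce S).connectedComponentMk y0 :=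
    fun h => hxy0 (ConnectedComponent.exact h)
  -- key: adding a missing edge keeps W a cut only if it makes G−W connected
  have key : ∀ a b : V, a ≠ b → ¬ G.Adj a b →
      ((G ⊔ fromEdgeSet {s(a, b)}).induce S).Connected := by
    intro a b hab hnadj
    by_contra hdisc
    set G' := G ⊔ fromEdgeSet {s(a, b)} with hG'
    have hvc : vertexConnAtMost G' k := Or.inr ⟨W, hW.le, hdisc⟩
    have hGlt : G < G' := by
      refine lt_of_le_of_ne le_sup_left fun h => hnadj ?_
      have hadj' : G'.Adj a b := by simp [hG', hab]
      rwa [← h] at hadj'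
    exact absurd (hmax G' hvc) (not_le.mpr (aux_somborIndex_lt hGlt))
  constructor
  · -- exactly two components
    have hno3 : ∀ C1 C2 C3 : (G.induce S).ConnectedComponent,
        C1 ≠ C2 → C1 ≠ C3 → C2 ≠ C3 → False := by
      intro C1 C2 C3 h12 h13 h23
      obtain ⟨x1, rfl⟩ := C1.exists_rep
      obtain ⟨x2, rfl⟩ := C2.exists_rep
      obtain ⟨x3, rfl⟩ := C3.exists_rep
      have hab : (x1 : V) ≠ (x2 : V) := fun h => h12 (by rw [Subtype.ext h])
      have hnadj : ¬ G.Adj (x1 : V) (x2 : V) := by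
        intro h
        exact h12 (ConnectedComponent.sound (Adj.reachable (show (G.induce S).Adj x1 x2 from h)))
      have hconn' := key _ _ hab hnadj
      set G' := G ⊔ fromEdgeSet {s((x1 : V), (x2 : V))} with hG'
      have hconst : ∀ z w : S, (G'.induce S).Adj z w →
          ((G.induce S).connectedComponentMk z = (G.induce S).connectedComponentMk x3) =
          ((G.induce S).connectedComponentMk w = (G.induce S).connectedComponentMk x3) := by
        intro z w hzw
        rcases (sup_adj _ _ _ _).mp (show G'.Adj (z : V) (w : V) from hzw) with hg | hf
        · rw [ConnectedComponent.sound (Adj.reachable (show (G.induce S).Adj z w from hg))]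
        · obtain ⟨hmem, -⟩ := hf
          rw [Sym2.toRel_prop, Set.mem_singleton_iff, Sym2.eq_iff] at hmem
          rcases hmem with ⟨h1, h2⟩ | ⟨h1, h2⟩
          · rw [Subtype.ext h1, Subtype.ext h2]
            exact propext (iff_of_false h13 h23)
          · rw [Subtype.ext h1, Subtype.ext h2]
            exact propext (iff_of_false h23 h13)
      have := aux_reachable_const _ hconst (hconn'.preconnected x3 x1)
      exact h13 (cast this rfl)
    rw [Nat.card_eq_two_iff]
    refine ⟨(G.induce S).connectedComponentMk x0, (G.induce S).connectedComponentMk y0, hC12, ?_⟩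
    ext C
    simp only [Set.mem_insert_iff, Set.mem_singleton_iff, Set.mem_univ, iff_true]
    by_contra h
    push_neg at h
    exact hno3 _ _ C hC12 (Ne.symm h.1) (Ne.symm h.2)
  · -- cliques
    intro C
    rw [isClique_iff]
    intro a ha b hb hab
    by_contra hnadj
    have hconn' := key a b hab hnadj
    set G' := G ⊔ fromEdgeSet {s(a, b)} with hG'
    have hmkA : ∀ z : S, (z : V) = a → (G.induce S).connectedComponentMk z = C := by
      intro z hz
      have hzW : (z : V) ∉ (↑W : Set V) := z.2
      rcases ha with h | h
      · obtain ⟨za, hza, he⟩ := h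
        have : z = za := Subtype.ext (hz.trans he.symm)
        rw [this]
        exact (ConnectedComponent.mem_supp_iff _ _).mp hza
      · exact absurd (hz ▸ h) hzW
    have hmkB : ∀ z : S, (z : V) = b → (G.induce S).connectedComponentMk z = C := by
      intro z hz
      have hzW : (z : V) ∉ (↑W : Set V) := z.2
      rcases hb with h | h
      · obtain ⟨zb, hzb, he⟩ := h
        have : z = zb := Subtype.ext (hz.trans he.symm)
        rw [this]
        exact (ConnectedComponent.mem_supp_iff _ _).mp hzb
      · exact absurd (hz ▸ h) hzW
    have hconst : ∀ z w : S, (G'.induce S).Adj z w →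
        (G.induce S).connectedComponentMk z = (G.induce S).connectedComponentMk w := by
      intro z w hzw
      rcases (sup_adj _ _ _ _).mp (show G'.Adj (z : V) (w : V) from hzw) with hg | hf
      · exact ConnectedComponent.sound (Adj.reachable (show (G.induce S).Adj z w from hg))
      · obtain ⟨hmem, -⟩ := hf
        rw [Sym2.toRel_prop, Set.mem_singleton_iff, Sym2.eq_iff] at hmem
        rcases hmem with ⟨h1, h2⟩ | ⟨h1, h2⟩
        · rw [hmkA z h1, hmkB w h2]
        · rw [hmkB z h1, hmkA w h2]
    exact hC12 (aux_reachable_const _ hconst (hconn'.preconnected x0 y0))
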